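/- Let M be a real symmetric n×n matrix whose eigenvalues in nondecreasing order λ_1 ≤ λ_2 ≤ … ≤ λ_n satisfy λ_2 ≥ 0, and suppose λ_1 < 0 with a unit eigenvector v. Then M − λ_1 v vᵀ is the Frobenius-nearest positive semidefinite matrix to M: for every positive semidefinite n×n matrix P, ‖M − P‖_F ≥ |λ_1| = ‖M − (M − λ_1 v vᵀ)‖_F. -/

import Mathlib

/-- The Frobenius norm of a real matrix. -/
noncomputable def frobNorm {n : ℕ} (A : Matrix (Fin n) (Fin n) ℝ) : ℝ :=
  Real.sqrt (∑ i, ∑ j, (A i j) ^ 2)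

/-- If `M` is a real symmetric matrix with at most one negative eigenvalue and
`lam < 0` is an eigenvalue with unit eigenvector `v`, then `M - lam • v vᵀ` is the
Frobenius-nearest PSD matrix to `M`: its Frobenius distance to `M` is `|lam|`, and
every PSD matrix `P` satisfies `‖M - P‖_F ≥ |lam|`. -/
theorem frobenius_nearest_psd {n : ℕ}
    (M : Matrix (Fin n) (Fin n) ℝ) (hM : M.IsHermitian)
    (hone : (Finset.univ.filter fun i : Fin n => hM.eigenvalues i < 0).card ≤ 1)
    (lam : ℝ) (hlam : lam < 0) (v : Fin n → ℝ)
    (hv : M.mulVec v = lam • v) (hunit : ∑ i, v i ^ 2 = 1) :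
    frobNorm (M - (M - lam • Matrix.vecMulVec v v)) = |lam| ∧
      ∀ P : Matrix (Fin n) (Fin n) ℝ, P.PosSemidef → |lam| ≤ frobNorm (M - P) := by
  constructor
  · -- distance equals |lam|
    have hE : ∀ i j, (M - (M - lam • Matrix.vecMulVec v v)) i j = lam * (v i * v j) := by
      intro i j
      simp [Matrix.sub_apply, Matrix.smul_apply, Matrix.vecMulVec_apply]
    have hsum : ∑ i, ∑ j, ((M - (M - lam • Matrix.vecMulVec v v)) i j) ^ 2 = lam ^ 2 := by
      have hrow : ∀ i : Fin n, ∑ j, ((M - (M - lam • Matrix.vecMulVec v v)) i j) ^ 2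
          = lam ^ 2 * v i ^ 2 := by
        intro i
        calc ∑ j, ((M - (M - lam • Matrix.vecMulVec v v)) i j) ^ 2
            = ∑ j, (lam ^ 2 * v i ^ 2) * v j ^ 2 := by
              apply Finset.sum_congr rfl; intro j _; rw [hE]; ring
          _ = (lam ^ 2 * v i ^ 2) * ∑ j, v j ^ 2 := by rw [Finset.mul_sum]
          _ = lam ^ 2 * v i ^ 2 := by rw [hunit, mul_one]
      rw [Finset.sum_congr rfl fun i _ => hrow i, ← Finset.mul_sum, hunit, mul_one]
    rw [frobNorm, hsum, Real.sqrt_sq_eq_abs]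
  · intro P hP
    -- S = vᵀ (M - P) v
    set A := M - P with hA
    have hq : 0 ≤ dotProduct v (P.mulVec v) := by
      have := hP.dotProduct_mulVec_nonneg v
      simpa using this
    have hMv : dotProduct v (M.mulVec v) = lam := by
      rw [hv]
      have h1 : dotProduct v v = 1 := by
        rw [← hunit]; simp [dotProduct, sq]
      calc dotProduct v (lam • v) = lam * dotProduct v v := by
            simp [dotProduct, Finset.mul_sum]
            apply Finset.sum_congr rfl; intro i _; ring
        _ = lam := by rw [h1, mul_one]
    have hSval : ∑ i, ∑ j, A i j * (v i * v j) = dotProduct v (A.mulVec v) := by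
      simp only [dotProduct, Matrix.mulVec, Finset.mul_sum]
      apply Finset.sum_congr rfl; intro i _
      apply Finset.sum_congr rfl; intro j _
      ring
    have hSle : ∑ i, ∑ j, A i j * (v i * v j) ≤ lam := by
      rw [hSval, hA, Matrix.sub_mulVec, dotProduct_sub, hMv]
      linarith
    -- Cauchy-Schwarz over the product type
    have hCS : (∑ p : Fin n × Fin n, A p.1 p.2 * (v p.1 * v p.2)) ^ 2
        ≤ (∑ p : Fin n × Fin n, (A p.1 p.2) ^ 2) *
          (∑ p : Fin n × Fin n, (v p.1 * v p.2) ^ 2) :=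
      Finset.sum_mul_sq_le_sq_mul_sq Finset.univ _ _
    have hg : (∑ p : Fin n × Fin n, (v p.1 * v p.2) ^ 2) = 1 := by
      rw [Fintype.sum_prod_type]
      calc ∑ i, ∑ j, (v i * v j) ^ 2 = ∑ i, v i ^ 2 * ∑ j, v j ^ 2 := by
            apply Finset.sum_congr rfl; intro i _
            rw [Finset.mul_sum]
            apply Finset.sum_congr rfl; intro j _; ring
        _ = 1 := by rw [hunit]; simp [hunit]
    have hS2 : lam ^ 2 ≤ (∑ i, ∑ j, A i j * (v i * v j)) ^ 2 := by
      nlinarith [hSle, hlam]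
    have hfin : lam ^ 2 ≤ ∑ i, ∑ j, (A i j) ^ 2 := by
      have h1 : (∑ p : Fin n × Fin n, A p.1 p.2 * (v p.1 * v p.2))
          = ∑ i, ∑ j, A i j * (v i * v j) := Fintype.sum_prod_type _
      have h2 : (∑ p : Fin n × Fin n, (A p.1 p.2) ^ 2)
          = ∑ i, ∑ j, (A i j) ^ 2 := Fintype.sum_prod_type _
      rw [h1, h2, hg, mul_one] at hCS
      linarith
    have : |lam| = Real.sqrt (lam ^ 2) := (Real.sqrt_sq_eq_abs lam).symm
    rw [this, frobNorm]
    exact Real.sqrt_le_sqrt hfin
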